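/- Let t, s ∈ (1,∞) and set ν_t = μ_t/√(6(1+t²)) (the normalization of μ_t, since ‖μ_t‖² = 6(1+t²)). If there exist orthogonal matrices A₁ ∈ O(6) and A₂ ∈ O(3) such that A₁⁻¹ J_{ν_s}(w) A₁ = J_{ν_t}(A₂⁻¹ w) for all w ∈ span(e₇,e₈,e₉) (identifying the center with ℝ³), then t = s. -/

import Mathlib

open Matrix Finset Real Filter

noncomputable section

/-- The canonical basis vector `eᵢ` of `ℝ⁹` (0-indexed: `e 0 = e₁`, …, `e 8 = e₉`). -/
def e (i : Fin 9) : Fin 9 → ℝ := Pi.single i 1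

/-- Half of the structure constants of `μ_t` (before antisymmetrization):
`μ_t(e₅,e₄)=e₇, μ_t(e₁,e₆)=e₈, μ_t(e₃,e₂)=e₉, μ_t(e₃,e₆)=t e₇, μ_t(e₅,e₂)=t e₈, μ_t(e₁,e₄)=t e₉`. -/
def muHalf (t : ℝ) (i j k : Fin 9) : ℝ :=
  (if i = 4 ∧ j = 3 ∧ k = 6 then (1:ℝ) else 0) +
  (if i = 0 ∧ j = 5 ∧ k = 7 then (1:ℝ) else 0) +
  (if i = 2 ∧ j = 1 ∧ k = 8 then (1:ℝ) else 0) +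
  (if i = 2 ∧ j = 5 ∧ k = 6 then t else 0) +
  (if i = 4 ∧ j = 1 ∧ k = 7 then t else 0) +
  (if i = 0 ∧ j = 3 ∧ k = 8 then t else 0)

/-- The (antisymmetric) structure constants of `μ_t`. -/
def muC (t : ℝ) (i j k : Fin 9) : ℝ := muHalf t i j k - muHalf t j i k

/-- The two-step nilpotent Lie bracket `μ_t` on `ℝ⁹`. -/
def mu (t : ℝ) (X Y : Fin 9 → ℝ) : Fin 9 → ℝ :=
  fun k => ∑ i, ∑ j, X i * Y j * muC t i j k

/-- Structure constants of `μ̃_t`: those of `μ_t` plus `μ̃_t(e₁,e₂)=e₇`. -/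
def muTildeHalf (t : ℝ) (i j k : Fin 9) : ℝ :=
  muHalf t i j k + (if i = 0 ∧ j = 1 ∧ k = 6 then (1:ℝ) else 0)

def muTildeC (t : ℝ) (i j k : Fin 9) : ℝ := muTildeHalf t i j k - muTildeHalf t j i k

/-- The two-step nilpotent Lie bracket `μ̃_t` on `ℝ⁹`. -/
def muTilde (t : ℝ) (X Y : Fin 9 → ℝ) : Fin 9 → ℝ :=
  fun k => ∑ i, ∑ j, X i * Y j * muTildeC t i j k

/-- Structure constants of `μ̄_t`: those of `μ̃_t` plus `μ̄_t(e₃,e₄)=e₈`. -/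
def muBarHalf (t : ℝ) (i j k : Fin 9) : ℝ :=
  muTildeHalf t i j k + (if i = 2 ∧ j = 3 ∧ k = 7 then (1:ℝ) else 0)

def muBarC (t : ℝ) (i j k : Fin 9) : ℝ := muBarHalf t i j k - muBarHalf t j i k

/-- The two-step nilpotent Lie bracket `μ̄_t` on `ℝ⁹`. -/
def muBar (t : ℝ) (X Y : Fin 9 → ℝ) : Fin 9 → ℝ :=
  fun k => ∑ i, ∑ j, X i * Y j * muBarC t i j k

/-- The space of (skew-symmetric bilinear) bracket candidates on `ℝ⁹`,
represented as bare functions. -/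
abbrev NilBracket := (Fin 9 → ℝ) → (Fin 9 → ℝ) → Fin 9 → ℝ

/-- The Ricci operator of `(ℝ⁹, ν)` w.r.t. the canonical inner product, as a matrix in the
canonical basis:
`⟨Ric_ν X, Y⟩ = -(1/2)∑ᵢⱼ⟨ν(X,eᵢ),eⱼ⟩⟨ν(Y,eᵢ),eⱼ⟩ + (1/4)∑ᵢⱼ⟨ν(eᵢ,eⱼ),X⟩⟨ν(eᵢ,eⱼ),Y⟩`. -/
def ric (ν : NilBracket) : Matrix (Fin 9) (Fin 9) ℝ :=
  fun a b =>
    -(1/2) * (∑ i, ∑ j, ν (e a) (e i) j * ν (e b) (e i) j)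
    + (1/4) * (∑ i, ∑ j, ν (e i) (e j) a * ν (e i) (e j) b)

/-- `D` is a derivation of the algebra `(ℝ⁹, ν)`. -/
def IsDerivation (ν : NilBracket) (D : Matrix (Fin 9) (Fin 9) ℝ) : Prop :=
  ∀ X Y : Fin 9 → ℝ, D.mulVec (ν X Y) = ν (D.mulVec X) Y + ν X (D.mulVec Y)

/-- The basis `e₁,…,e₆` of `v = span(e₁,…,e₆) ⊆ ℝ⁹`, indexed by `Fin 6`. -/
def E (a : Fin 6) : Fin 9 → ℝ := e (Fin.castLE (by norm_num) a)

/-- The skew-symmetric 6×6 matrix `J_ν(w)`, `w = x e₇ + y e₈ + z e₉`, defined by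
`⟨J_ν(w) v₁, v₂⟩ = ⟨ν(v₁,v₂), w⟩` for `v₁,v₂ ∈ span(e₁,…,e₆)`. -/
def Jmat (ν : NilBracket) (x y z : ℝ) : Matrix (Fin 6) (Fin 6) ℝ :=
  fun a b => ν (E b) (E a) 6 * x + ν (E b) (E a) 7 * y + ν (E b) (E a) 8 * z

/-- The `GL₉(ℝ)` action on brackets: `(g·ν)(X,Y) = g ν(g⁻¹X, g⁻¹Y)`. -/
def act (g : Matrix (Fin 9) (Fin 9) ℝ) (ν : NilBracket) : NilBracket :=
  fun X Y => g.mulVec (ν (g⁻¹.mulVec X) (g⁻¹.mulVec Y))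

/-- The algebras `(ℝ⁹, ν)` and `(ℝ⁹, ν')` are isomorphic:
there is `g ∈ GL₉(ℝ)` with `g ν(X,Y) = ν'(gX, gY)` for all `X, Y`. -/
def LieIso (ν ν' : NilBracket) : Prop :=
  ∃ g : Matrix (Fin 9) (Fin 9) ℝ, IsUnit g ∧
    ∀ X Y : Fin 9 → ℝ, g.mulVec (ν X Y) = ν' (g.mulVec X) (g.mulVec Y)

/-- The normalized bracket `ν_t = μ_t / ‖μ_t‖`, where `‖μ_t‖² = 6(1+t²)`. -/
def nmu (t : ℝ) : NilBracket := fun X Y => (1 / Real.sqrt (6*(1+t^2))) • mu t X Y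


section AuxStatement7

set_option maxHeartbeats 2000000
set_option maxRecDepth 8000

lemma mu_e' (t : ℝ) (i j k : Fin 9) : mu t (e i) (e j) k = muC t i j k := by
  show (∑ a, ∑ b, e i a * e j b * muC t a b k) = _
  rw [Finset.sum_eq_single i (fun a _ ha => by simp [e, Pi.single_eq_of_ne ha])
      (by simp)]
  rw [Finset.sum_eq_single j (fun b _ hb => by simp [e, Pi.single_eq_of_ne hb])
      (by simp)]
  simp [e]

lemma nmu_e' (r : ℝ) (i j k : Fin 9) :
    nmu r (e i) (e j) k = (1 / Real.sqrt (6*(1+r^2))) * muC r i j k := by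
  simp [nmu, mu_e']

lemma Jmat_nmu' (r x y z : ℝ) : Jmat (nmu r) x y z = (1 / Real.sqrt (6*(1+r^2))) •
    !![0,0,0,-(r*z),0,-y; 0,0,z,0,r*y,0; 0,-z,0,0,0,-(r*x);
       r*z,0,0,0,x,0; 0,-(r*y),0,-x,0,0; y,0,r*x,0,0,0] := by
  ext a b
  fin_cases a <;> fin_cases b <;>
    simp only [Jmat, E, nmu_e', Matrix.smul_apply, Matrix.of_apply, Matrix.cons_val',
      Matrix.cons_val_zero, Matrix.cons_val_one, Matrix.head_cons, Matrix.empty_val',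
      Matrix.cons_val_fin_one, Matrix.head_fin_const, smul_eq_mul] <;>
    norm_num [muC, muHalf, Fin.ext_iff, show ((0:Fin 9)).val = 0 from rfl, show ((1:Fin 9)).val = 1 from rfl, show ((2:Fin 9)).val = 2 from rfl, show ((3:Fin 9)).val = 3 from rfl, show ((4:Fin 9)).val = 4 from rfl, show ((5:Fin 9)).val = 5 from rfl, show ((6:Fin 9)).val = 6 from rfl, show ((7:Fin 9)).val = 7 from rfl, show ((8:Fin 9)).val = 8 from rfl] <;> ring

lemma detM' (r x y z : ℝ) :
    (!![0,0,0,-(r*z),0,-y; 0,0,z,0,r*y,0; 0,-z,0,0,0,-(r*x);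
       r*z,0,0,0,x,0; 0,-(r*y),0,-x,0,0; y,0,r*x,0,0,0] : Matrix (Fin 6) (Fin 6) ℝ).det
      = (1+r^3)^2 * (x^2*y^2*z^2) := by
  simp only [Matrix.det_succ_row_zero, ← Nat.not_even_iff_odd, Matrix.submatrix_apply,
    Fin.succ_zero_eq_one, Matrix.submatrix_submatrix, Matrix.det_unique, Fin.default_eq_zero,
    Function.comp_apply, Fin.succ_one_eq_two, Fin.sum_univ_succ, Fin.val_zero,
    Fin.zero_succAbove, Finset.univ_unique, Fin.val_succ, Fin.val_eq_zero,
    Fin.succ_succAbove_zero, Finset.sum_singleton, Fin.succ_succAbove_one, Even.add_self,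
    Matrix.cons_val_zero, Matrix.cons_val_one, Matrix.head_cons, Matrix.cons_val_succ,
    Matrix.cons_val', Matrix.empty_val', Matrix.cons_val_fin_one, Matrix.head_fin_const]
  norm_num [Matrix.cons_val_two, Matrix.tail_cons, Matrix.head_cons, Fin.succAbove, Fin.lt_def, show (((2:Fin 3):Fin 3)) = ⟨2, by norm_num⟩ from rfl, show (((2:Fin 4):Fin 4)) = ⟨2, by norm_num⟩ from rfl, show (((2:Fin 5):Fin 5)) = ⟨2, by norm_num⟩ from rfl, show (((2:Fin 6):Fin 6)) = ⟨2, by norm_num⟩ from rfl, show (((2:Fin 7):Fin 7)) = ⟨2, by norm_num⟩ from rfl, show (((2:Fin 3).succ:Fin 4)) = ⟨3, by norm_num⟩ from rfl, show (((2:Fin 4).succ:Fin 5)) = ⟨3, by norm_num⟩ from rfl, show (((2:Fin 5).succ:Fin 6)) = ⟨3, by norm_num⟩ from rfl, show (((2:Fin 6).succ:Fin 7)) = ⟨3, by norm_num⟩ from rfl, show (((2:Fin 3).castSucc:Fin 4)) = ⟨2, by norm_num⟩ from rfl, show (((2:Fin 4).castSucc:Fin 5)) = ⟨2, by norm_num⟩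 from rfl, show (((2:Fin 5).castSucc:Fin 6)) = ⟨2, by norm_num⟩ from rfl, show (((2:Fin 6).castSucc:Fin 7)) = ⟨2, by norm_num⟩ from rfl, show (((2:Fin 3).succ.succ:Fin 5)) = ⟨4, by norm_num⟩ from rfl, show (((2:Fin 4).succ.succ:Fin 6)) = ⟨4, by norm_num⟩ from rfl, show (((2:Fin 5).succ.succ:Fin 7)) = ⟨4, by norm_num⟩ from rfl, show (((2:Fin 3).succ.castSucc:Fin 5)) = ⟨3, by norm_num⟩ from rfl, show (((2:Fin 4).succ.castSucc:Fin 6)) = ⟨3, by norm_num⟩ from rfl, show (((2:Fin 5).succ.castSucc:Fin 7)) = ⟨3, by norm_num⟩ from rfl, show (((2:Fin 3).castSucc.succ:Fin 5)) = ⟨3, by norm_num⟩ from rfl, show (((2:Fin 4).castSucc.succ:Fin 6)) = ⟨3, by norm_num⟩ from rfl, show (((2:Fin 5).castSucc.succ:Fin 7)) = ⟨3, by norm_num⟩ from rfl, show (((2:Fin 3).castSucc.castSucc:Fin 5)) = ⟨2, by norm_num⟩ from rfl, show (((2:Fin 4).castSucc.castSucc:Fin 6)) = ⟨2, by norm_num⟩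 from rfl, show (((2:Fin 5).castSucc.castSucc:Fin 7)) = ⟨2, by norm_num⟩ from rfl, show (((2:Fin 3).succ.succ.succ:Fin 6)) = ⟨5, by norm_num⟩ from rfl, show (((2:Fin 4).succ.succ.succ:Fin 7)) = ⟨5, by norm_num⟩ from rfl, show (((2:Fin 3).succ.succ.castSucc:Fin 6)) = ⟨4, by norm_num⟩ from rfl, show (((2:Fin 4).succ.succ.castSucc:Fin 7)) = ⟨4, by norm_num⟩ from rfl, show (((2:Fin 3).succ.castSucc.succ:Fin 6)) = ⟨4, by norm_num⟩ from rfl, show (((2:Fin 4).succ.castSucc.succ:Fin 7)) = ⟨4, by norm_num⟩ from rfl, show (((2:Fin 3).succ.castSucc.castSucc:Fin 6)) = ⟨3, by norm_num⟩ from rfl, show (((2:Fin 4).succ.castSucc.castSucc:Fin 7)) = ⟨3, by norm_num⟩ from rfl, show (((2:Fin 3).castSucc.succ.succ:Fin 6)) = ⟨4, by norm_num⟩ from rfl, show (((2:Fin 4).castSucc.succ.succ:Fin 7)) = ⟨4, by norm_num⟩ from rfl, show (((2:Fin 3).castSucc.succ.castSucc:Fin 6)) = ⟨3, by norm_num⟩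 from rfl, show (((2:Fin 4).castSucc.succ.castSucc:Fin 7)) = ⟨3, by norm_num⟩ from rfl, show (((2:Fin 3).castSucc.castSucc.succ:Fin 6)) = ⟨3, by norm_num⟩ from rfl, show (((2:Fin 4).castSucc.castSucc.succ:Fin 7)) = ⟨3, by norm_num⟩ from rfl, show (((2:Fin 3).castSucc.castSucc.castSucc:Fin 6)) = ⟨2, by norm_num⟩ from rfl, show (((2:Fin 4).castSucc.castSucc.castSucc:Fin 7)) = ⟨2, by norm_num⟩ from rfl]
  ring

lemma detJ' (r x y z : ℝ) :
    (Jmat (nmu r) x y z).det = (1+r^3)^2 * (x^2*y^2*z^2) / (6*(1+r^2))^3 := by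
  have hu : (0:ℝ) < 6*(1+r^2) := by positivity
  rw [Jmat_nmu', Matrix.det_smul, detM']
  have h6 : (1 / Real.sqrt (6*(1+r^2)))^(6:ℕ) = 1/(6*(1+r^2))^3 := by
    rw [div_pow, one_pow,
      show (Real.sqrt (6*(1+r^2)))^6 = ((Real.sqrt (6*(1+r^2)))^2)^3 by ring,
      Real.sq_sqrt hu.le]
  simp only [Fintype.card_fin, h6]
  ring

lemma det_conj' (A M : Matrix (Fin 6) (Fin 6) ℝ) (h : IsUnit A) :
    (A⁻¹ * M * A).det = M.det := by
  rw [Matrix.det_mul, Matrix.det_mul, Matrix.det_nonsing_inv]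
  have : IsUnit A.det := (Matrix.isUnit_iff_isUnit_det A).mp h
  rw [mul_right_comm, Ring.inverse_mul_cancel _ this, one_mul]

lemma dot_mulVec_orth {n : Type*} [DecidableEq n] [Fintype n] (A : Matrix n n ℝ)
    (h : Aᵀ * A = 1) (w : n → ℝ) : A.mulVec w ⬝ᵥ A.mulVec w = w ⬝ᵥ w := by
  rw [Matrix.dotProduct_mulVec, ← Matrix.mulVec_transpose]
  rw [Matrix.mulVec_mulVec, h, Matrix.one_mulVec]

lemma amgm3 (a b c : ℝ) (h : a^2+b^2+c^2 = 3) : (a*b*c)^2 ≤ 1 := by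
  have h9 : (a^2+b^2+c^2)^2 = 9 := by rw [h]; norm_num
  have h2 : a^2*b^2+b^2*c^2+c^2*a^2 ≤ 3 := by
    nlinarith [sq_nonneg (a^2-b^2), sq_nonneg (b^2-c^2), sq_nonneg (a^2-c^2)]
  nlinarith [sq_nonneg (a*(b^2-c^2)), sq_nonneg (b*(c^2-a^2)), sq_nonneg (c*(a^2-b^2))]

lemma key' (t s : ℝ) (ht : 1 < t) (hs : 1 < s)
    (h : (1+s^3)^2*(1+t^2)^3 = (1+t^3)^2*(1+s^2)^3) : t = s := by
  have ha : (0:ℝ) < t - 1 := by linarith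
  have hb : (0:ℝ) < s - 1 := by linarith
  have hP : (0:ℝ) < 24*(s-1) + 48*(s-1)^2 + 48*(s-1)^3 + 24*(s-1)^4 + 4*(s-1)^5 + 24*(t-1) + 120*(t-1)*(s-1) + 192*(t-1)*(s-1)^2 + 168*(t-1)*(s-1)^3 + 76*(t-1)*(s-1)^4 + 12*(t-1)*(s-1)^5 + 48*(t-1)^2 + 192*(t-1)^2*(s-1) + 288*(t-1)^2*(s-1)^2 + 238*(t-1)^2*(s-1)^3 + 102*(t-1)^2*(s-1)^4 + 15*(t-1)^2*(s-1)^5 + 48*(t-1)^3 + 168*(t-1)^3*(s-1) + 238*(t-1)^3*(s-1)^2 + 186*(t-1)^3*(s-1)^3 + 75*(t-1)^3*(s-1)^4 + 10*(t-1)^3*(s-1)^5 + 24*(t-1)^4 + 76*(t-1)^4*(s-1) + 102*(t-1)^4*(s-1)^2 + 75*(t-1)^4*(s-1)^3 + 28*(t-1)^4*(s-1)^4 + 3*(t-1)^4*(s-1)^5 + 4*(t-1)^5 + 12*(t-1)^5*(s-1) + 15*(t-1)^5*(s-1)^2 + 10*(t-1)^5*(s-1)^3 + 3*(t-1)^5*(s-1)^4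 := by positivity
  have hQ : ((-3)*s + (2)*s^2 + (-3)*s^3 + (-3)*t + (2)*t*s + (-3)*t*s^2 + (2)*t^2 + (-3)*t^2*s + (6)*t^2*s^2 + (3)*t^2*s^5 + (-3)*t^3 + (-6)*t^3*s^3 + (3)*t^3*s^4 + (-2)*t^3*s^5 + (3)*t^4*s^3 + (-2)*t^4*s^4 + (3)*t^4*s^5 + (3)*t^5*s^2 + (-2)*t^5*s^3 + (3)*t^5*s^4 : ℝ) = 24*(s-1) + 48*(s-1)^2 + 48*(s-1)^3 + 24*(s-1)^4 + 4*(s-1)^5 + 24*(t-1) + 120*(t-1)*(s-1) + 192*(t-1)*(s-1)^2 + 168*(t-1)*(s-1)^3 + 76*(t-1)*(s-1)^4 + 12*(t-1)*(s-1)^5 + 48*(t-1)^2 + 192*(t-1)^2*(s-1) + 288*(t-1)^2*(s-1)^2 + 238*(t-1)^2*(s-1)^3 + 102*(t-1)^2*(s-1)^4 + 15*(t-1)^2*(s-1)^5 + 48*(t-1)^3 + 168*(t-1)^3*(s-1) + 238*(t-1)^3*(s-1)^2 + 186*(t-1)^3*(s-1)^3 + 75*(t-1)^3*(s-1)^4 +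 10*(t-1)^3*(s-1)^5 + 24*(t-1)^4 + 76*(t-1)^4*(s-1) + 102*(t-1)^4*(s-1)^2 + 75*(t-1)^4*(s-1)^3 + 28*(t-1)^4*(s-1)^4 + 3*(t-1)^4*(s-1)^5 + 4*(t-1)^5 + 12*(t-1)^5*(s-1) + 15*(t-1)^5*(s-1)^2 + 10*(t-1)^5*(s-1)^3 + 3*(t-1)^5*(s-1)^4 := by ring
  have h0 : (s - t) * ((-3)*s + (2)*s^2 + (-3)*s^3 + (-3)*t + (2)*t*s + (-3)*t*s^2 + (2)*t^2 + (-3)*t^2*s + (6)*t^2*s^2 + (3)*t^2*s^5 + (-3)*t^3 + (-6)*t^3*s^3 + (3)*t^3*s^4 + (-2)*t^3*s^5 + (3)*t^4*s^3 + (-2)*t^4*s^4 + (3)*t^4*s^5 + (3)*t^5*s^2 + (-2)*t^5*s^3 + (3)*t^5*s^4) = 0 := by linear_combination h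
  rcases mul_eq_zero.mp h0 with h1 | h2
  · linarith
  · rw [hQ] at h2; linarith

end AuxStatement7

/-- if `t,s ∈ (1,∞)` and there are `A₁ ∈ O(6)`, `A₂ ∈ O(3)` with
`A₁⁻¹ J_{ν_s}(w) A₁ = J_{ν_t}(A₂⁻¹ w)` for all `w` in the center (≅ ℝ³), then `t = s`. -/
theorem statement7 (t s : ℝ) (ht : t ∈ Set.Ioi (1:ℝ)) (hs : s ∈ Set.Ioi (1:ℝ))
    (A₁ : Matrix (Fin 6) (Fin 6) ℝ) (A₂ : Matrix (Fin 3) (Fin 3) ℝ)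
    (hA₁ : A₁ ∈ Matrix.orthogonalGroup (Fin 6) ℝ)
    (hA₂ : A₂ ∈ Matrix.orthogonalGroup (Fin 3) ℝ)
    (h : ∀ w : Fin 3 → ℝ,
      A₁⁻¹ * Jmat (nmu s) (w 0) (w 1) (w 2) * A₁
        = Jmat (nmu t) (A₂⁻¹.mulVec w 0) (A₂⁻¹.mulVec w 1) (A₂⁻¹.mulVec w 2)) :
    t = s := by
  rw [Set.mem_Ioi] at ht hs
  have hU1 : IsUnit A₁ := by
    rw [Matrix.mem_orthogonalGroup_iff] at hA₁
    exact (Matrix.isUnit_iff_isUnit_det A₁).mpr (Matrix.isUnit_det_of_right_inverse hA₁)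
  have hA₂r : A₂ * A₂ᵀ = 1 := by
    rw [Matrix.mem_orthogonalGroup_iff] at hA₂
    simpa using hA₂
  have hA₂l : A₂ᵀ * A₂ = 1 := by
    rw [Matrix.mem_orthogonalGroup_iff'] at hA₂
    simpa using hA₂
  have hInv : A₂⁻¹ = A₂ᵀ := Matrix.inv_eq_right_inv hA₂r
  have hBorth : (A₂⁻¹)ᵀ * A₂⁻¹ = 1 := by
    rw [hInv, Matrix.transpose_transpose]; exact hA₂r
  have hdetU : IsUnit A₂.det := Matrix.isUnit_det_of_right_inverse hA₂r
  have main : ∀ w : Fin 3 → ℝ,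
      (1+s^3)^2 * ((w 0)^2*(w 1)^2*(w 2)^2) / (6*(1+s^2))^3
        = (1+t^3)^2 * (((A₂⁻¹.mulVec w) 0)^2*((A₂⁻¹.mulVec w) 1)^2*((A₂⁻¹.mulVec w) 2)^2)
            / (6*(1+t^2))^3 := by
    intro w
    have hc := congrArg Matrix.det (h w)
    rw [det_conj' _ _ hU1, detJ', detJ'] at hc
    exact hc
  have hds : (0:ℝ) < (6*(1+s^2))^3 := by positivity
  have hdt : (0:ℝ) < (6*(1+t^2))^3 := by positivity
  set u : Fin 3 → ℝ := A₂⁻¹.mulVec ![1,1,1] with hu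
  have hnu : (u 0)^2 + (u 1)^2 + (u 2)^2 = 3 := by
    have h3 := dot_mulVec_orth A₂⁻¹ hBorth ![1,1,1]
    rw [← hu] at h3
    simp only [dotProduct, Fin.sum_univ_three] at h3
    norm_num [Matrix.cons_val_two, Matrix.tail_cons, Matrix.head_cons] at h3
    nlinarith [h3]
  have hle1 : (1+s^3)^2 / (6*(1+s^2))^3 ≤ (1+t^3)^2 / (6*(1+t^2))^3 := by
    have h1 := main ![1,1,1]
    norm_num [Matrix.cons_val_two, Matrix.tail_cons, Matrix.head_cons] at h1
    rw [← hu] at h1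
    have hq : (u 0)^2*(u 1)^2*(u 2)^2 ≤ 1 := by
      have := amgm3 (u 0) (u 1) (u 2) hnu
      nlinarith [this]
    calc (1+s^3)^2 / (6*(1+s^2))^3
        = (1+t^3)^2 * ((u 0)^2*(u 1)^2*(u 2)^2) / (6*(1+t^2))^3 := by
          rw [← h1]
      _ ≤ (1+t^3)^2 * 1 / (6*(1+t^2))^3 := by
          gcongr
      _ = (1+t^3)^2 / (6*(1+t^2))^3 := by ring
  set v : Fin 3 → ℝ := A₂.mulVec ![1,1,1] with hv
  have hBv : A₂⁻¹.mulVec v = ![1,1,1] := by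
    rw [hv, Matrix.mulVec_mulVec, Matrix.nonsing_inv_mul _ hdetU, Matrix.one_mulVec]
  have hnv : (v 0)^2 + (v 1)^2 + (v 2)^2 = 3 := by
    have h3 := dot_mulVec_orth A₂ hA₂l ![1,1,1]
    rw [← hv] at h3
    simp only [dotProduct, Fin.sum_univ_three] at h3
    norm_num [Matrix.cons_val_two, Matrix.tail_cons, Matrix.head_cons] at h3
    nlinarith [h3]
  have hle2 : (1+t^3)^2 / (6*(1+t^2))^3 ≤ (1+s^3)^2 / (6*(1+s^2))^3 := by
    have h1 := main v
    rw [hBv] at h1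
    norm_num [Matrix.cons_val_two, Matrix.tail_cons, Matrix.head_cons] at h1
    have hq : (v 0)^2*(v 1)^2*(v 2)^2 ≤ 1 := by
      have := amgm3 (v 0) (v 1) (v 2) hnv
      nlinarith [this]
    calc (1+t^3)^2 / (6*(1+t^2))^3
        = (1+s^3)^2 * ((v 0)^2*(v 1)^2*(v 2)^2) / (6*(1+s^2))^3 := by
          rw [h1]
      _ ≤ (1+s^3)^2 * 1 / (6*(1+s^2))^3 := by
          gcongr
      _ = (1+s^3)^2 / (6*(1+s^2))^3 := by ring
  have hcc : (1+s^3)^2 / (6*(1+s^2))^3 = (1+t^3)^2 / (6*(1+t^2))^3 :=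
    le_antisymm hle1 hle2
  have hpoly : (1+s^3)^2*(1+t^2)^3 = (1+t^3)^2*(1+s^2)^3 := by
    field_simp at hcc
    nlinarith [hcc]
  exact key' t s ht hs hpoly
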